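/- Let r ≥ 2 and let C = (w_1, …, w_{2ℓ+1}) be a semi-valid tuple in Ω_n such that |[w_i, w_{i-1}]| ≥ r for all i (i.e., C is r-valid). Then H_n^{(r)}(C) is M_1^{(r)}-saturated. -/

import Mathlib

open Finset

/-- An abstract convex geometric hypergraph: `m` vertices on a circle, with the
cyclic ordering `0 < 1 < ⋯ < m-1 < 0`, together with a family of edges. -/
structure CGH where
  m : ℕ
  edges : Finset (Finset (Fin m))

/-- A list of points of `Fin n` is in (strict) cyclic order if some rotation of it
is strictly increasing in the linear order of `Fin n`. -/
def CyclicSorted {n : ℕ} (l : List (Fin n)) : Prop :=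
  ∃ k : ℕ, (l.rotate k).Chain' (· < ·)

/-- `H` contains a subhypergraph isomorphic to the convex geometric hypergraph `F`:
there is an injection of the vertices of `F` into `Fin n` respecting the cyclic
orderings and sending every edge of `F` to an edge of `H`. -/
def HasCopy (F : CGH) {n : ℕ} (H : Finset (Finset (Fin n))) : Prop :=
  ∃ f : Fin F.m → Fin n, Function.Injective f ∧ CyclicSorted (List.ofFn f) ∧
    ∀ e ∈ F.edges, e.image f ∈ H

/-- `H` is an `F`-saturated `r`-uniform convex geometric hypergraph on `Fin n`. -/
def IsSat (F : CGH) (r : ℕ) {n : ℕ} (H : Finset (Finset (Fin n))) : Prop :=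
  (∀ h ∈ H, h.card = r) ∧ ¬ HasCopy F H ∧
    ∀ e : Finset (Fin n), e.card = r → e ∉ H → HasCopy F (insert e H)

/-- The saturation number `sat_○(n, F)` for `r`-uniform cgh's on `Fin n`. -/
noncomputable def satNum (F : CGH) (r n : ℕ) : ℕ :=
  sInf {k | ∃ H : Finset (Finset (Fin n)), IsSat F r H ∧ H.card = k}

/-- `M_1^{(r)}`: two geometrically disjoint `r`-tuples. -/
def M1r (r : ℕ) : CGH where
  m := 2 * r
  edges := {Finset.univ.filter (fun i : Fin (2 * r) => (i : ℕ) < r),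
            Finset.univ.filter (fun i : Fin (2 * r) => r ≤ (i : ℕ))}

def M1cgh : CGH := ⟨6, {({0, 1, 2} : Finset (Fin 6)), ({3, 4, 5} : Finset (Fin 6))}⟩
def M2cgh : CGH := ⟨6, {({0, 1, 3} : Finset (Fin 6)), ({2, 4, 5} : Finset (Fin 6))}⟩
def M3cgh : CGH := ⟨6, {({0, 2, 4} : Finset (Fin 6)), ({1, 3, 5} : Finset (Fin 6))}⟩
def S1cgh : CGH := ⟨5, {({0, 1, 4} : Finset (Fin 5)), ({0, 2, 3} : Finset (Fin 5))}⟩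
def S2cgh : CGH := ⟨5, {({0, 1, 2} : Finset (Fin 5)), ({0, 3, 4} : Finset (Fin 5))}⟩
def S3cgh : CGH := ⟨5, {({0, 1, 3} : Finset (Fin 5)), ({0, 2, 4} : Finset (Fin 5))}⟩
def D1cgh : CGH := ⟨4, {({0, 1, 2} : Finset (Fin 4)), ({0, 2, 3} : Finset (Fin 4))}⟩
def D2cgh : CGH := ⟨4, {({0, 1, 2} : Finset (Fin 4)), ({0, 1, 3} : Finset (Fin 4))}⟩

/-- The closed clockwise arc `[a, b]` in `Fin n`. -/
def arcCC {n : ℕ} (a b : Fin n) : Finset (Fin n) :=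
  if a ≤ b then Finset.univ.filter (fun x => a ≤ x ∧ x ≤ b)
  else Finset.univ.filter (fun x => a ≤ x ∨ x ≤ b)

/-- The open clockwise arc `(a, b)` in `Fin n`. -/
def arcOO {n : ℕ} (a b : Fin n) : Finset (Fin n) :=
  if a < b then Finset.univ.filter (fun x => a < x ∧ x < b)
  else Finset.univ.filter (fun x => a < x ∨ x < b)

/-- The tuple `(w_1, …, w_{2ℓ+1})` (`0`-indexed here) consists of distinct points with
`w_1 < w_3 < ⋯ < w_{2ℓ+1} < w_2 < w_4 < ⋯ < w_{2ℓ} < w_1` in the cyclic order. -/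
def SemiValid {n : ℕ} (ℓ : ℕ) (w : Fin (2 * ℓ + 1) → Fin n) : Prop :=
  Function.Injective w ∧
    CyclicSorted (List.ofFn fun p : Fin (2 * ℓ + 1) =>
      w ⟨(2 * (p : ℕ)) % (2 * ℓ + 1), Nat.mod_lt _ (by omega)⟩)

/-- A semi-valid tuple is `r`-valid if moreover `|[w_i, w_{i-1}]| ≥ r` for all `i`. -/
def RValid {n : ℕ} (r ℓ : ℕ) (w : Fin (2 * ℓ + 1) → Fin n) : Prop :=
  SemiValid ℓ w ∧ ∀ i : Fin (2 * ℓ + 1), r ≤ (arcCC (w i) (w (i - 1))).card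

/-- `H_n^{(r)}(C)`: all `r`-sets meeting every interval `[w_i, w_{i-1}]`. -/
def HnC {n : ℕ} (r ℓ : ℕ) (w : Fin (2 * ℓ + 1) → Fin n) : Finset (Finset (Fin n)) :=
  (Finset.powersetCard r Finset.univ).filter fun e =>
    ∀ i : Fin (2 * ℓ + 1), (e ∩ arcCC (w i) (w (i - 1))).Nonempty

/-- `j` is the vertex `λ(v)` for `v` in `H`. -/
def IsLam {n : ℕ} [NeZero n] (H : Finset (Finset (Fin n))) (v j : Fin n) : Prop :=
  (∃ h ∈ H, v ∈ h ∧ h ⊆ arcCC j v) ∧ ¬ ∃ h ∈ H, v ∈ h ∧ h ⊆ arcCC (j + 1) v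

/-- `j` is the vertex `ρ(v)` for `v` in `H`. -/
def IsRho {n : ℕ} [NeZero n] (H : Finset (Finset (Fin n))) (v j : Fin n) : Prop :=
  (∃ h ∈ H, v ∈ h ∧ h ⊆ arcCC v j) ∧ ¬ ∃ h ∈ H, v ∈ h ∧ h ⊆ arcCC v (j - 1)

noncomputable def lamF {n : ℕ} [NeZero n] (H : Finset (Finset (Fin n))) (v : Fin n) : Fin n :=
  letI := Classical.propDecidable (∃ j, IsLam H v j)
  if h : ∃ j, IsLam H v j then h.choose else v

noncomputable def rhoF {n : ℕ} [NeZero n] (H : Finset (Finset (Fin n))) (v : Fin n) : Fin n :=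
  letI := Classical.propDecidable (∃ j, IsRho H v j)
  if h : ∃ j, IsRho H v j then h.choose else v

/-- Strict cyclic betweenness on `Fin n`. -/
def CyclicSbtw {n : ℕ} (a b c : Fin n) : Prop :=
  (a < b ∧ b < c) ∨ (b < c ∧ c < a) ∨ (c < a ∧ a < b)

/-- Isomorphism of two cgh's on `Fin n`: a bijection of the vertex set respecting the
cyclic order and inducing a bijection of the edge sets. -/
def CGHIso {n : ℕ} (H H' : Finset (Finset (Fin n))) : Prop :=
  ∃ g : Fin n ≃ Fin n,
    (∀ a b c : Fin n, CyclicSbtw a b c → CyclicSbtw (g a) (g b) (g c)) ∧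
    ∀ e : Finset (Fin n), e ∈ H ↔ e.image g ∈ H'

/-- The 3-cgh `H_n^{(3)}`: all triples containing `v_0`, together with all triples
containing one of the pairs `{v_1, v_{n-2}}`, `{v_1, v_{n-1}}`, `{v_2, v_{n-1}}`. -/
def Hn3 (n : ℕ) (hn : 6 ≤ n) : Finset (Finset (Fin n)) :=
  (Finset.powersetCard 3 Finset.univ).filter fun e =>
    (⟨0, by omega⟩ : Fin n) ∈ e ∨
    ((⟨1, by omega⟩ : Fin n) ∈ e ∧ (⟨n - 2, by omega⟩ : Fin n) ∈ e) ∨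
    ((⟨1, by omega⟩ : Fin n) ∈ e ∧ (⟨n - 1, by omega⟩ : Fin n) ∈ e) ∨
    ((⟨2, by omega⟩ : Fin n) ∈ e ∧ (⟨n - 1, by omega⟩ : Fin n) ∈ e)

/-- Saturation with respect to a family of cgh's. -/
def FamSat (ℱ : Set CGH) (r : ℕ) {n : ℕ} (H : Finset (Finset (Fin n))) : Prop :=
  (∀ h ∈ H, h.card = r) ∧ (∀ F ∈ ℱ, ¬ HasCopy F H) ∧
    ∀ e : Finset (Fin n), e.card = r → e ∉ H → ∃ F ∈ ℱ, HasCopy F (insert e H)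

noncomputable def famSatNum (ℱ : Set CGH) (r n : ℕ) : ℕ :=
  sInf {k | ∃ H : Finset (Finset (Fin n)), FamSat ℱ r H ∧ H.card = k}

/-- Rotation of a point of `Fin n` by an integer amount `m`. -/
def finShift {n : ℕ} (hn : 0 < n) (v : Fin n) (m : ℤ) : Fin n :=
  ⟨(((v : ℤ) + m) % (n : ℤ)).toNat, by
    have h0 : (0 : ℤ) < (n : ℤ) := by exact_mod_cast hn
    have h1 := Int.emod_nonneg ((v : ℤ) + m) (by omega : (n : ℤ) ≠ 0)
    have h2 := Int.emod_lt_of_pos ((v : ℤ) + m) h0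
    omega⟩

/-- The tuple `w` is `(i,k)`-consecutive: starting from position `i`, the entries at
positions `i, i+2, …, i+2(k-1)` are `k` consecutive points `v_j, v_{j+1}, …, v_{j+k-1}`. -/
def ConsecAt {n ℓ : ℕ} (hn : 0 < n) (w : Fin (2 * ℓ + 1) → Fin n)
    (i : Fin (2 * ℓ + 1)) (k : ℕ) : Prop :=
  ∃ j : Fin n, ∀ s : ℕ, s < k →
    w (i + ⟨(2 * s) % (2 * ℓ + 1), Nat.mod_lt _ (by omega)⟩) = finShift hn j s

/-- The tuple `C_{i,k,m}`: the `k` consecutive points at positions `i, i+2, …, i+2(k-1)`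
are rotated by `m` units; all other entries are unchanged. -/
def shiftTuple {n ℓ : ℕ} (hn : 0 < n) (w : Fin (2 * ℓ + 1) → Fin n)
    (i : Fin (2 * ℓ + 1)) (k : ℕ) (m : ℤ) : Fin (2 * ℓ + 1) → Fin n :=
  fun p => if (p - i).val % 2 = 0 ∧ (p - i).val / 2 < k then finShift hn (w p) m else w p

namespace HnCSat

lemma mem_arcCC_iff {n : ℕ} {a b x : Fin n} :
    x ∈ arcCC a b ↔ ((a.val ≤ b.val ∧ a.val ≤ x.val ∧ x.val ≤ b.val) ∨
      (b.val < a.val ∧ (a.val ≤ x.val ∨ x.val ≤ b.val))) := by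
  unfold arcCC
  split_ifs with h <;> rw [Fin.le_def] at h <;>
    simp only [Finset.mem_filter, Finset.mem_univ, true_and, Fin.le_def] <;> omega

lemma mem_arcOO_iff {n : ℕ} {a b x : Fin n} :
    x ∈ arcOO a b ↔ ((a.val < b.val ∧ a.val < x.val ∧ x.val < b.val) ∨
      (b.val ≤ a.val ∧ (a.val < x.val ∨ x.val < b.val))) := by
  unfold arcOO
  split_ifs with h <;> rw [Fin.lt_def] at h <;>
    simp only [Finset.mem_filter, Finset.mem_univ, true_and, Fin.lt_def] <;> omega

lemma arc1 {n : ℕ} {α β γ δ p q u v : Fin n}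
    (hcfg : (α ≤ β ∧ β < γ ∧ γ ≤ δ) ∨ (δ < α ∧ α ≤ β ∧ β < γ))
    (hp : p ∈ arcCC α β) (hq : q ∈ arcCC γ δ)
    (hpu : p ∈ arcCC u v) (hqu : q ∈ arcCC u v) :
    (β ∈ arcCC u v ∧ γ ∈ arcCC u v) ∨ (δ ∈ arcCC u v ∧ α ∈ arcCC u v) := by
  simp only [mem_arcCC_iff] at hp hq hpu hqu ⊢
  simp only [Fin.le_def, Fin.lt_def] at hcfg
  omega

lemma arc2 {n : ℕ} {u v v' x : Fin n} (h1 : v' ∈ arcOO v u)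
    (h2 : x ∈ arcCC u v) (h3 : x ∈ arcCC v' u) : x = u := by
  rw [mem_arcOO_iff] at h1
  rw [mem_arcCC_iff] at h2 h3
  rw [Fin.ext_iff]
  omega

variable {n ℓ : ℕ}

/-- sorted coordinates -/
def Z (k : ℕ) (w : Fin (2*ℓ+1) → Fin n) (t : ℕ) : Fin n :=
  w ⟨2*(t+k) % (2*ℓ+1), Nat.mod_lt _ (by omega)⟩

lemma Z_congr (k : ℕ) (w : Fin (2*ℓ+1) → Fin n) {a b : ℕ}
    (h : a % (2*ℓ+1) = b % (2*ℓ+1)) : Z k w a = Z k w b := by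
  unfold Z
  congr 1
  apply Fin.ext
  show 2*(a+k) % (2*ℓ+1) = 2*(b+k) % (2*ℓ+1)
  have h' : a ≡ b [MOD 2*ℓ+1] := h
  exact (h'.add_right k).mul_left 2

lemma Z_mod (k : ℕ) (w : Fin (2*ℓ+1) → Fin n) (a : ℕ) :
    Z k w (a % (2*ℓ+1)) = Z k w a :=
  Z_congr k w (Nat.mod_mod_of_dvd a dvd_rfl)

lemma Z_sub (k : ℕ) (w : Fin (2*ℓ+1) → Fin n) {a : ℕ} (h : 2*ℓ+1 ≤ a) :
    Z k w a = Z k w (a - (2*ℓ+1)) :=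
  Z_congr k w (Nat.mod_eq_sub_mod h)

abbrev Wlist (w : Fin (2*ℓ+1) → Fin n) : List (Fin n) :=
  List.ofFn fun p : Fin (2 * ℓ + 1) =>
      w ⟨(2 * (p : ℕ)) % (2 * ℓ + 1), Nat.mod_lt _ (by omega)⟩

lemma Z_lt {k : ℕ} {w : Fin (2*ℓ+1) → Fin n}
    (hch : ((Wlist w).rotate k).Chain' (· < ·)) {a b : ℕ}
    (hab : a < b) (hb : b < 2*ℓ+1) : Z k w a < Z k w b := by
  have hp := List.isChain_iff_pairwise.mp hch
  rw [List.pairwise_iff_getElem] at hp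
  have hlen : ((Wlist w).rotate k).length = 2*ℓ+1 := by simp [Wlist]
  have key : ∀ (c : ℕ) (hc : c < ((Wlist w).rotate k).length),
      ((Wlist w).rotate k)[c] = Z k w c := by
    intro c hc
    rw [List.getElem_rotate]
    have hlen2 : (Wlist w).length = 2*ℓ+1 := by simp [Wlist]
    simp only [hlen2, List.getElem_ofFn]
    unfold Z
    congr 1
    apply Fin.ext
    show 2 * ((c+k) % (2*ℓ+1)) % (2*ℓ+1) = 2*(c+k) % (2*ℓ+1)
    exact (Nat.mod_modEq (c+k) (2*ℓ+1)).mul_left 2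
  have h := hp a b (by omega) (by omega) hab
  rw [key a (by omega), key b (by omega)] at h
  exact h

lemma Z_le {k : ℕ} {w : Fin (2*ℓ+1) → Fin n}
    (hch : ((Wlist w).rotate k).Chain' (· < ·)) {a b : ℕ}
    (hab : a ≤ b) (hb : b < 2*ℓ+1) : Z k w a ≤ Z k w b := by
  rcases eq_or_lt_of_le hab with rfl | h
  · exact le_refl _
  · exact le_of_lt (Z_lt hch h hb)

lemma two_mul_modeq_cancel {ℓ x y : ℕ} (h : 2*x ≡ 2*y [MOD 2*ℓ+1]) :
    x ≡ y [MOD 2*ℓ+1] := by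
  have h2 := h.mul_left (ℓ+1)
  have e : ∀ z : ℕ, (ℓ+1) * (2*z) = z + (2*ℓ+1)*z := by intro z; ring
  unfold Nat.ModEq at h2 ⊢
  rw [e x, e y] at h2
  rwa [Nat.add_mul_mod_self_left, Nat.add_mul_mod_self_left] at h2

/-- the index map `t ↦ J t` as a function on `Fin (2ℓ+1)` -/
def Jf (k : ℕ) (ℓ : ℕ) (t : ℕ) : Fin (2*ℓ+1) := ⟨2*(t+k) % (2*ℓ+1), Nat.mod_lt _ (by omega)⟩

lemma Jf_surj (k : ℕ) (i : Fin (2*ℓ+1)) : ∃ t : ℕ, t < 2*ℓ+1 ∧ Jf k ℓ t = i := by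
  have hinj : Function.Injective (fun t : Fin (2*ℓ+1) => Jf k ℓ t.val) := by
    intro t t' h
    simp only [Jf] at h
    have h2 : 2*(t.val+k) ≡ 2*(t'.val+k) [MOD 2*ℓ+1] := by
      unfold Nat.ModEq
      exact congrArg Fin.val h
    have h3 := two_mul_modeq_cancel h2
    have h4 := h3.add_right_cancel' k
    unfold Nat.ModEq at h4
    rw [Nat.mod_eq_of_lt t.isLt, Nat.mod_eq_of_lt t'.isLt] at h4
    exact Fin.ext h4
  have hsurj := Finite.injective_iff_surjective.mp hinj
  obtain ⟨t, ht⟩ := hsurj i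
  exact ⟨t.val, t.isLt, ht⟩

lemma w_Jf_sub_one (k : ℕ) (w : Fin (2*ℓ+1) → Fin n) (hℓ : 1 ≤ ℓ) (t : ℕ) :
    w (Jf k ℓ t - 1) = Z k w (t+ℓ) := by
  have h1 : (1 : Fin (2*ℓ+1)).val = 1 := by
    rw [Fin.val_one']
    exact Nat.mod_eq_of_lt (by omega)
  have hsub : (Jf k ℓ t - 1 : Fin (2*ℓ+1)).val
      = ((2*ℓ+1) - 1 + 2*(t+k) % (2*ℓ+1)) % (2*ℓ+1) := by
    rw [Fin.sub_def, h1]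
    rfl
  have hidx : ((2*ℓ+1) - 1 + 2*(t+k) % (2*ℓ+1)) % (2*ℓ+1) = 2*(t+ℓ+k) % (2*ℓ+1) := by
    have h2 : (2*ℓ+1) - 1 + 2*(t+k) % (2*ℓ+1) ≡ (2*ℓ+1) - 1 + 2*(t+k) [MOD 2*ℓ+1] :=
      (Nat.mod_modEq (2*(t+k)) (2*ℓ+1)).add_left _
    have h3 : (2*ℓ+1) - 1 + 2*(t+k) = 2*(t+ℓ+k) := by omega
    rw [h3] at h2
    exact h2
  unfold Z
  congr 1
  apply Fin.ext
  rw [hsub, hidx]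

lemma Z_mem_arc {k : ℕ} {w : Fin (2*ℓ+1) → Fin n}
    (hch : ((Wlist w).rotate k).Chain' (· < ·)) (hℓ : 1 ≤ ℓ) {t d : ℕ}
    (ht : t < 2*ℓ+1) (hd : d ≤ ℓ) :
    Z k w (t+d) ∈ arcCC (Z k w t) (Z k w (t+ℓ)) := by
  rw [mem_arcCC_iff]
  rcases lt_or_ge (t+ℓ) (2*ℓ+1) with h1 | h1
  · left
    have e1 : Z k w t ≤ Z k w (t+d) := Z_le hch (by omega) (by omega)
    have e2 : Z k w (t+d) ≤ Z k w (t+ℓ) := Z_le hch (by omega) (by omega)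
    exact ⟨Fin.le_def.mp (le_trans e1 e2), Fin.le_def.mp e1, Fin.le_def.mp e2⟩
  · rw [Z_sub k w h1]
    right
    have hb : Z k w (t+ℓ-(2*ℓ+1)) < Z k w t := Z_lt hch (by omega) ht
    refine ⟨Fin.lt_def.mp hb, ?_⟩
    rcases lt_or_ge (t+d) (2*ℓ+1) with h2 | h2
    · exact Or.inl (Fin.le_def.mp (Z_le hch (by omega) h2))
    · rw [Z_sub k w h2]
      exact Or.inr (Fin.le_def.mp (Z_le hch (by omega) (by omega)))

lemma Z_triple {k : ℕ} {w : Fin (2*ℓ+1) → Fin n}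
    (hch : ((Wlist w).rotate k).Chain' (· < ·)) (hℓ : 1 ≤ ℓ) {t : ℕ} (ht : t < 2*ℓ+1) :
    Z k w (t+ℓ+1) ∈ arcOO (Z k w (t+ℓ)) (Z k w t) := by
  rw [mem_arcOO_iff]
  rcases lt_or_ge (t+ℓ+1) (2*ℓ+1) with h1 | h1
  · right
    have e1 : Z k w t < Z k w (t+ℓ) := Z_lt hch (by omega) (by omega)
    have e2 : Z k w (t+ℓ) < Z k w (t+ℓ+1) := Z_lt hch (by omega) (by omega)
    exact ⟨Fin.le_def.mp (le_of_lt e1), Or.inl (Fin.lt_def.mp e2)⟩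
  rcases eq_or_lt_of_le h1 with h2 | h2
  · right
    have e1 : Z k w t < Z k w (t+ℓ) := Z_lt hch (by omega) (by omega)
    rw [Z_sub k w (by omega : 2*ℓ+1 ≤ t+ℓ+1)]
    have e3 : Z k w (t+ℓ+1-(2*ℓ+1)) < Z k w t := Z_lt hch (by omega) ht
    exact ⟨Fin.le_def.mp (le_of_lt e1), Or.inr (Fin.lt_def.mp e3)⟩
  · left
    rw [Z_sub k w (by omega : 2*ℓ+1 ≤ t+ℓ), Z_sub k w (by omega : 2*ℓ+1 ≤ t+ℓ+1)]
    have e1 : Z k w (t+ℓ-(2*ℓ+1)) < Z k w t := Z_lt hch (by omega) ht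
    have e2 : Z k w (t+ℓ-(2*ℓ+1)) < Z k w (t+ℓ+1-(2*ℓ+1)) := Z_lt hch (by omega) (by omega)
    have e3 : Z k w (t+ℓ+1-(2*ℓ+1)) < Z k w t := Z_lt hch (by omega) ht
    exact ⟨Fin.lt_def.mp e1, Fin.lt_def.mp e2, Fin.lt_def.mp e3⟩

lemma shift_bound {ℓ : ℕ} (p : ℕ → Prop) [DecidablePred p]
    (hpair : ∀ t, t < 2*ℓ+1 → ¬(p t ∧ p ((t+ℓ+1) % (2*ℓ+1)))) :
    ((Finset.range (2*ℓ+1)).filter p).card ≤ ℓ := by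
  classical
  set m := 2*ℓ+1 with hm
  set F := (Finset.range m).filter p with hF
  set G := F.image (fun t => (t+ℓ+1) % m) with hG
  have hmpos : 0 < m := by omega
  have hcard : G.card = F.card := by
    apply Finset.card_image_of_injOn
    intro a ha b hb h
    simp only [hF, Finset.coe_filter, Set.mem_setOf_eq, Finset.mem_range] at ha hb
    simp only at h
    have h' : a + (ℓ+1) ≡ b + (ℓ+1) [MOD m] := by
      unfold Nat.ModEq
      have e : ∀ z : ℕ, z + ℓ + 1 = z + (ℓ+1) := by omega
      rw [← e a, ← e b]
      exact h
    have h2 := h'.add_right_cancel' (ℓ+1)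
    unfold Nat.ModEq at h2
    rw [Nat.mod_eq_of_lt ha.1, Nat.mod_eq_of_lt hb.1] at h2
    exact h2
  have hdisj : Disjoint F G := by
    rw [Finset.disjoint_left]
    intro x hxF hxG
    simp only [hG, Finset.mem_image] at hxG
    obtain ⟨s, hsF, hsx⟩ := hxG
    simp only [hF, Finset.mem_filter, Finset.mem_range] at hxF hsF
    exact hpair s hsF.1 ⟨hsF.2, hsx ▸ hxF.2⟩
  have hsub : F ∪ G ⊆ Finset.range m := by
    intro x hx
    rcases Finset.mem_union.mp hx with h | h
    · exact Finset.mem_of_subset (Finset.filter_subset _ _) h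
    · simp only [hG, Finset.mem_image] at h
      obtain ⟨s, _, hsx⟩ := h
      rw [Finset.mem_range, ← hsx]
      exact Nat.mod_lt _ hmpos
  have := Finset.card_le_card hsub
  rw [Finset.card_union_of_disjoint hdisj, hcard, Finset.card_range] at this
  omega

lemma core {k : ℕ} {w : Fin (2*ℓ+1) → Fin n}
    (hch : ((Wlist w).rotate k).Chain' (· < ·)) (hℓ : 1 ≤ ℓ)
    (E1 E2 : Finset (Fin n)) {α β γ δ : Fin n}
    (hE1 : ∀ x ∈ E1, x ∈ arcCC α β) (hE2 : ∀ x ∈ E2, x ∈ arcCC γ δ)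
    (hmeet1 : ∀ t, t < 2*ℓ+1 → (E1 ∩ arcCC (Z k w t) (Z k w (t+ℓ))).Nonempty)
    (hmeet2 : ∀ t, t < 2*ℓ+1 → (E2 ∩ arcCC (Z k w t) (Z k w (t+ℓ))).Nonempty)
    (hcfg : (α ≤ β ∧ β < γ ∧ γ ≤ δ) ∨ (δ < α ∧ α ≤ β ∧ β < γ)) : False := by
  classical
  have K_mod : ∀ t : ℕ, arcCC (Z k w (t % (2*ℓ+1))) (Z k w (t % (2*ℓ+1) + ℓ))
      = arcCC (Z k w t) (Z k w (t+ℓ)) := by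
    intro t
    rw [Z_mod k w t]
    congr 1
    apply Z_congr
    exact (Nat.mod_modEq t (2*ℓ+1)).add_right ℓ
  have step1 : ∀ t, t < 2*ℓ+1 →
      (β ∈ arcCC (Z k w t) (Z k w (t+ℓ)) ∧ γ ∈ arcCC (Z k w t) (Z k w (t+ℓ))) ∨
      (δ ∈ arcCC (Z k w t) (Z k w (t+ℓ)) ∧ α ∈ arcCC (Z k w t) (Z k w (t+ℓ))) := by
    intro t ht
    obtain ⟨p, hp⟩ := hmeet1 t ht
    obtain ⟨q, hq⟩ := hmeet2 t ht
    rw [Finset.mem_inter] at hp hq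
    exact arc1 hcfg (hE1 p hp.1) (hE2 q hq.1) hp.2 hq.2
  have K_shift : ∀ t : ℕ, arcCC (Z k w (t+ℓ+1)) (Z k w (t+ℓ+1+ℓ))
      = arcCC (Z k w (t+ℓ+1)) (Z k w t) := by
    intro t
    congr 1
    apply Z_congr
    show (t+ℓ+1+ℓ) % (2*ℓ+1) = t % (2*ℓ+1)
    have e : t+ℓ+1+ℓ = t + (2*ℓ+1) := by omega
    rw [e]
    exact Nat.add_mod_right t (2*ℓ+1)
  have pairlem : ∀ (x y : Fin n), x ≠ y → ∀ t, t < 2*ℓ+1 →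
      ¬((x ∈ arcCC (Z k w t) (Z k w (t+ℓ)) ∧ y ∈ arcCC (Z k w t) (Z k w (t+ℓ))) ∧
        (x ∈ arcCC (Z k w ((t+ℓ+1) % (2*ℓ+1))) (Z k w ((t+ℓ+1) % (2*ℓ+1) + ℓ)) ∧
         y ∈ arcCC (Z k w ((t+ℓ+1) % (2*ℓ+1))) (Z k w ((t+ℓ+1) % (2*ℓ+1) + ℓ)))) := by
    intro x y hxy t ht hmem
    obtain ⟨⟨h1, h2⟩, h3, h4⟩ := hmem
    rw [K_mod (t+ℓ+1), K_shift t] at h3 h4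
    have hx : x = Z k w t := arc2 (Z_triple hch hℓ ht) h1 h3
    have hy : y = Z k w t := arc2 (Z_triple hch hℓ ht) h2 h4
    exact hxy (hx.trans hy.symm)
  have hbg : β ≠ γ := by
    rcases hcfg with ⟨_, h, _⟩ | ⟨_, _, h⟩ <;> exact ne_of_lt h
  have hda : δ ≠ α := by
    rcases hcfg with ⟨h1, h2, h3⟩ | ⟨h, _, _⟩
    · exact ne_of_gt (lt_of_le_of_lt h1 (lt_of_lt_of_le h2 h3))
    · exact ne_of_lt h
  have b1 := shift_bound
    (fun t => β ∈ arcCC (Z k w t) (Z k w (t+ℓ)) ∧ γ ∈ arcCC (Z k w t) (Z k w (t+ℓ)))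
    (fun t ht => pairlem β γ hbg t ht)
  have b2 := shift_bound
    (fun t => δ ∈ arcCC (Z k w t) (Z k w (t+ℓ)) ∧ α ∈ arcCC (Z k w t) (Z k w (t+ℓ)))
    (fun t ht => pairlem δ α hda t ht)
  have cover : Finset.range (2*ℓ+1) ⊆
      ((Finset.range (2*ℓ+1)).filter
        (fun t => β ∈ arcCC (Z k w t) (Z k w (t+ℓ)) ∧ γ ∈ arcCC (Z k w t) (Z k w (t+ℓ)))) ∪
      ((Finset.range (2*ℓ+1)).filter
        (fun t => δ ∈ arcCC (Z k w t) (Z k w (t+ℓ)) ∧ α ∈ arcCC (Z k w t) (Z k w (t+ℓ)))) := by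
    intro t htr
    have ht := Finset.mem_range.mp htr
    rcases step1 t ht with h | h
    · exact Finset.mem_union_left _ (Finset.mem_filter.mpr ⟨htr, h⟩)
    · exact Finset.mem_union_right _ (Finset.mem_filter.mpr ⟨htr, h⟩)
  have hc := Finset.card_le_card cover
  have hc2 := Finset.card_union_le
      ((Finset.range (2*ℓ+1)).filter
        (fun t => β ∈ arcCC (Z k w t) (Z k w (t+ℓ)) ∧ γ ∈ arcCC (Z k w t) (Z k w (t+ℓ))))
      ((Finset.range (2*ℓ+1)).filter
        (fun t => δ ∈ arcCC (Z k w t) (Z k w (t+ℓ)) ∧ α ∈ arcCC (Z k w t) (Z k w (t+ℓ))))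
  rw [Finset.card_range] at hc
  omega

lemma arcCC_mem_lin {u x v : Fin n} (h1 : u ≤ x) (h2 : x ≤ v) : x ∈ arcCC u v := by
  rw [Fin.le_def] at h1 h2
  rw [mem_arcCC_iff]
  omega

lemma arcCC_mem_hi {u v x : Fin n} (hvu : v < u) (h : u ≤ x) : x ∈ arcCC u v := by
  rw [Fin.lt_def] at hvu
  rw [Fin.le_def] at h
  rw [mem_arcCC_iff]
  omega

lemma arcCC_mem_lo {u v x : Fin n} (hvu : v < u) (h : x ≤ v) : x ∈ arcCC u v := by
  rw [Fin.lt_def] at hvu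
  rw [Fin.le_def] at h
  rw [mem_arcCC_iff]
  omega

lemma addmod {M : ℕ} (hM : 0 < M) {a : ℕ} (ha : a < M) (k2 : ℕ) :
    (a + k2) % M = a + k2 % M ∧ a + k2 % M < M ∨
    (a + k2) % M = a + k2 % M - M ∧ M ≤ a + k2 % M := by
  have h0 : k2 % M < M := Nat.mod_lt _ hM
  have h1 : (a + k2) % M = (a + k2 % M) % M := (Nat.mod_modEq k2 M).symm.add_left a
  rcases lt_or_ge (a + k2 % M) M with h | h
  · left
    rw [h1, Nat.mod_eq_of_lt h]
    exact ⟨rfl, h⟩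
  · right
    rw [h1, Nat.mod_eq_sub_mod h, Nat.mod_eq_of_lt (by omega)]
    exact ⟨rfl, h⟩

def G (r k2 : ℕ) (hr : 0 < r) (f : Fin (2*r) → Fin n) (a : ℕ) : Fin n :=
  f ⟨(a+k2) % (2*r), Nat.mod_lt _ (by omega)⟩

lemma G_lt {r k2 : ℕ} (hr : 0 < r) {f : Fin (2*r) → Fin n}
    (hch2 : ((List.ofFn f).rotate k2).Chain' (· < ·)) {a b : ℕ}
    (hab : a < b) (hb : b < 2*r) : G r k2 hr f a < G r k2 hr f b := by
  have hp := List.isChain_iff_pairwise.mp hch2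
  rw [List.pairwise_iff_getElem] at hp
  have hlen : ((List.ofFn f).rotate k2).length = 2*r := by simp
  have key : ∀ (c : ℕ) (hc : c < ((List.ofFn f).rotate k2).length),
      ((List.ofFn f).rotate k2)[c] = G r k2 hr f c := by
    intro c hc
    rw [List.getElem_rotate]
    simp only [List.length_ofFn, List.getElem_ofFn]
    rfl
  have h := hp a b (by omega) (by omega) hab
  rw [key a (by omega), key b (by omega)] at h
  exact h

lemma G_le {r k2 : ℕ} (hr : 0 < r) {f : Fin (2*r) → Fin n}
    (hch2 : ((List.ofFn f).rotate k2).Chain' (· < ·)) {a b : ℕ}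
    (hab : a ≤ b) (hb : b < 2*r) : G r k2 hr f a ≤ G r k2 hr f b := by
  rcases eq_or_lt_of_le hab with rfl | h
  · exact le_refl _
  · exact le_of_lt (G_lt hr hch2 h hb)

lemma G_cover {r k2 : ℕ} (hr : 0 < r) (f : Fin (2*r) → Fin n) (i : Fin (2*r)) :
    ∃ a, a < 2*r ∧ f i = G r k2 hr f a ∧ (a + k2) % (2*r) = i.val := by
  have key : ((i.val + (2*r - k2 % (2*r))) % (2*r) + k2) % (2*r) = i.val := by
    have h1 : (i.val + (2*r - k2 % (2*r))) % (2*r) + k2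
        ≡ i.val + (2*r - k2 % (2*r)) + k2 [MOD 2*r] :=
      (Nat.mod_modEq _ _).add_right k2
    have h2 : i.val + (2*r - k2 % (2*r)) + k2
        ≡ i.val + (2*r - k2 % (2*r)) + k2 % (2*r) [MOD 2*r] :=
      Nat.ModEq.add_left _ (Nat.mod_modEq k2 (2*r)).symm
    have e : i.val + (2*r - k2 % (2*r)) + k2 % (2*r) = i.val + 2*r := by
      have := Nat.mod_lt k2 (show 0 < 2*r by omega)
      omega
    have h3 := h1.trans h2
    rw [e] at h3
    unfold Nat.ModEq at h3
    rw [h3, Nat.add_mod_right, Nat.mod_eq_of_lt i.isLt]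
  refine ⟨(i.val + (2*r - k2 % (2*r))) % (2*r), Nat.mod_lt _ (by omega), ?_, key⟩
  unfold G
  congr 1
  apply Fin.ext
  exact key.symm

lemma HnC_meets {r k : ℕ} (hℓ : 1 ≤ ℓ) {w : Fin (2*ℓ+1) → Fin n} {E : Finset (Fin n)}
    (hE : E ∈ HnC r ℓ w) (t : ℕ) (ht : t < 2*ℓ+1) :
    (E ∩ arcCC (Z k w t) (Z k w (t+ℓ))).Nonempty := by
  have h := (Finset.mem_filter.mp hE).2 (Jf k ℓ t)
  rw [w_Jf_sub_one k w hℓ t] at h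
  exact h

lemma not_hascopy {r k : ℕ} (hr : 2 ≤ r) (hℓ : 1 ≤ ℓ) {w : Fin (2*ℓ+1) → Fin n}
    (hch : ((Wlist w).rotate k).Chain' (· < ·))
    (hcopy : HasCopy (M1r r) (HnC r ℓ w)) : False := by
  obtain ⟨fc, finj, fcyc, hedges⟩ := hcopy
  obtain ⟨k2, hch2⟩ := fcyc
  have hr0 : 0 < r := by omega
  have he1 : (Finset.univ.filter (fun i : Fin (2*r) => (i : ℕ) < r)).image fc ∈ HnC r ℓ w := by
    apply hedges
    exact Finset.mem_insert_self _ _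
  have he2 : (Finset.univ.filter (fun i : Fin (2*r) => r ≤ (i : ℕ))).image fc ∈ HnC r ℓ w := by
    apply hedges
    exact Finset.mem_insert_of_mem (Finset.mem_singleton_self _)
  set e1 := (Finset.univ.filter (fun i : Fin (2*r) => (i : ℕ) < r)).image fc with he1d
  set e2 := (Finset.univ.filter (fun i : Fin (2*r) => r ≤ (i : ℕ))).image fc with he2d
  have hmeet1 : ∀ t, t < 2*ℓ+1 → (e1 ∩ arcCC (Z k w t) (Z k w (t+ℓ))).Nonempty :=
    fun t ht => HnC_meets hℓ he1 t ht
  have hmeet2 : ∀ t, t < 2*ℓ+1 → (e2 ∩ arcCC (Z k w t) (Z k w (t+ℓ))).Nonempty :=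
    fun t ht => HnC_meets hℓ he2 t ht
  have hk' : k2 % (2*r) < 2*r := Nat.mod_lt _ (by omega)
  have hcov1 : ∀ x ∈ e1, ∃ a, a < 2*r ∧ x = G r k2 hr0 fc a ∧
      (a + k2 % (2*r) < r ∨ (2*r ≤ a + k2 % (2*r) ∧ a + k2 % (2*r) < 3*r)) := by
    intro x hx
    replace hx := Finset.mem_image.mp hx
    obtain ⟨i, hi, rfl⟩ := hx
    replace hi := Finset.mem_filter.mp hi
    obtain ⟨a, ha, hGa, hmod⟩ := G_cover (k2 := k2) hr0 fc i
    have hir : (a + k2) % (2*r) < r := by rw [hmod]; exact hi.2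
    rcases addmod (show 0 < 2*r by omega) ha k2 with ⟨h1, h2⟩ | ⟨h1, h2⟩ <;> rw [h1] at hir
    · exact ⟨a, ha, hGa, Or.inl (by omega)⟩
    · exact ⟨a, ha, hGa, Or.inr (by omega)⟩
  have hcov2 : ∀ x ∈ e2, ∃ a, a < 2*r ∧ x = G r k2 hr0 fc a ∧
      ((r ≤ a + k2 % (2*r) ∧ a + k2 % (2*r) < 2*r) ∨ 3*r ≤ a + k2 % (2*r)) := by
    intro x hx
    replace hx := Finset.mem_image.mp hx
    obtain ⟨i, hi, rfl⟩ := hx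
    replace hi := Finset.mem_filter.mp hi
    obtain ⟨a, ha, hGa, hmod⟩ := G_cover (k2 := k2) hr0 fc i
    have hir : r ≤ (a + k2) % (2*r) := by rw [hmod]; exact hi.2
    rcases addmod (show 0 < 2*r by omega) ha k2 with ⟨h1, h2⟩ | ⟨h1, h2⟩ <;> rw [h1] at hir
    · exact ⟨a, ha, hGa, Or.inl (by omega)⟩
    · exact ⟨a, ha, hGa, Or.inr (by omega)⟩
  rcases Nat.eq_zero_or_pos (k2 % (2*r)) with hk0 | hk0
  · -- k' = 0 : e1 = G[0,r), e2 = G[r,2r)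
    refine core hch hℓ e1 e2 ?_ ?_ hmeet1 hmeet2
      (Or.inl ⟨G_le hr0 hch2 (by omega : 0 ≤ r-1) (by omega),
               G_lt hr0 hch2 (by omega : r-1 < r) (by omega),
               G_le hr0 hch2 (by omega : r ≤ 2*r-1) (by omega)⟩)
    · intro x hx
      obtain ⟨a, ha, rfl, hcond⟩ := hcov1 x hx
      rcases hcond with h | h
      · exact arcCC_mem_lin (G_le hr0 hch2 (by omega) (by omega))
          (G_le hr0 hch2 (by omega : a ≤ r-1) (by omega))
      · omega
    · intro x hx
      obtain ⟨a, ha, rfl, hcond⟩ := hcov2 x hx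
      rcases hcond with h | h
      · exact arcCC_mem_lin (G_le hr0 hch2 (by omega : r ≤ a) (by omega))
          (G_le hr0 hch2 (by omega : a ≤ 2*r-1) (by omega))
      · omega
  rcases lt_trichotomy (k2 % (2*r)) r with hkr | hkr | hkr
  · -- 0 < k' < r : swap roles
    refine core hch hℓ e2 e1 ?_ ?_ hmeet2 hmeet1
      (Or.inr ⟨G_lt hr0 hch2 (by omega : r - k2 % (2*r) - 1 < r - k2 % (2*r)) (by omega),
               G_le hr0 hch2 (by omega : r - k2 % (2*r) ≤ 2*r - k2 % (2*r) - 1) (by omega),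
               G_lt hr0 hch2 (by omega : 2*r - k2 % (2*r) - 1 < 2*r - k2 % (2*r)) (by omega)⟩)
    · intro x hx
      obtain ⟨a, ha, rfl, hcond⟩ := hcov2 x hx
      rcases hcond with h | h
      · exact arcCC_mem_lin (G_le hr0 hch2 (by omega : r - k2 % (2*r) ≤ a) (by omega))
          (G_le hr0 hch2 (by omega : a ≤ 2*r - k2 % (2*r) - 1) (by omega))
      · omega
    · intro x hx
      obtain ⟨a, ha, rfl, hcond⟩ := hcov1 x hx
      have hwrap : G r k2 hr0 fc (r - k2 % (2*r) - 1) < G r k2 hr0 fc (2*r - k2 % (2*r)) :=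
        G_lt hr0 hch2 (by omega) (by omega)
      rcases hcond with h | h
      · exact arcCC_mem_lo hwrap (G_le hr0 hch2 (by omega : a ≤ r - k2 % (2*r) - 1) (by omega))
      · exact arcCC_mem_hi hwrap (G_le hr0 hch2 (by omega : 2*r - k2 % (2*r) ≤ a) (by omega))
  · -- k' = r : swap roles, no wrap
    refine core hch hℓ e2 e1 ?_ ?_ hmeet2 hmeet1
      (Or.inl ⟨G_le hr0 hch2 (by omega : 0 ≤ r-1) (by omega),
               G_lt hr0 hch2 (by omega : r-1 < r) (by omega),
               G_le hr0 hch2 (by omega : r ≤ 2*r-1) (by omega)⟩)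
    · intro x hx
      obtain ⟨a, ha, rfl, hcond⟩ := hcov2 x hx
      rcases hcond with h | h
      · exact arcCC_mem_lin (G_le hr0 hch2 (by omega) (by omega))
          (G_le hr0 hch2 (by omega : a ≤ r-1) (by omega))
      · omega
    · intro x hx
      obtain ⟨a, ha, rfl, hcond⟩ := hcov1 x hx
      rcases hcond with h | h
      · omega
      · exact arcCC_mem_lin (G_le hr0 hch2 (by omega : r ≤ a) (by omega))
          (G_le hr0 hch2 (by omega : a ≤ 2*r-1) (by omega))
  · -- r < k' < 2r
    refine core hch hℓ e1 e2 ?_ ?_ hmeet1 hmeet2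
      (Or.inr ⟨G_lt hr0 hch2 (by omega : 2*r - k2 % (2*r) - 1 < 2*r - k2 % (2*r)) (by omega),
               G_le hr0 hch2 (by omega : 2*r - k2 % (2*r) ≤ 3*r - k2 % (2*r) - 1) (by omega),
               G_lt hr0 hch2 (by omega : 3*r - k2 % (2*r) - 1 < 3*r - k2 % (2*r)) (by omega)⟩)
    · intro x hx
      obtain ⟨a, ha, rfl, hcond⟩ := hcov1 x hx
      rcases hcond with h | h
      · omega
      · exact arcCC_mem_lin (G_le hr0 hch2 (by omega : 2*r - k2 % (2*r) ≤ a) (by omega))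
          (G_le hr0 hch2 (by omega : a ≤ 3*r - k2 % (2*r) - 1) (by omega))
    · intro x hx
      obtain ⟨a, ha, rfl, hcond⟩ := hcov2 x hx
      have hwrap : G r k2 hr0 fc (2*r - k2 % (2*r) - 1) < G r k2 hr0 fc (3*r - k2 % (2*r)) :=
        G_lt hr0 hch2 (by omega) (by omega)
      rcases hcond with h | h
      · exact arcCC_mem_lo hwrap (G_le hr0 hch2 (by omega : a ≤ 2*r - k2 % (2*r) - 1) (by omega))
      · exact arcCC_mem_hi hwrap (G_le hr0 hch2 (by omega : 3*r - k2 % (2*r) ≤ a) (by omega))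

lemma hit {k : ℕ} {w : Fin (2*ℓ+1) → Fin n}
    (hch : ((Wlist w).rotate k).Chain' (· < ·)) (hℓ : 1 ≤ ℓ) {t0 : ℕ} (ht0 : t0 < 2*ℓ+1) :
    ∀ t, t < 2*ℓ+1 → Z k w t0 ∈ arcCC (Z k w t) (Z k w (t+ℓ)) ∨
      Z k w (t0+ℓ) ∈ arcCC (Z k w t) (Z k w (t+ℓ)) := by
  intro t ht
  have hdlt : (t0 + (2*ℓ+1) - t) % (2*ℓ+1) < 2*ℓ+1 := Nat.mod_lt _ (by omega)
  have hkey : (t + (t0 + (2*ℓ+1) - t) % (2*ℓ+1)) % (2*ℓ+1) = t0 % (2*ℓ+1) := by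
    have h1 : (t + (t0 + (2*ℓ+1) - t) % (2*ℓ+1)) % (2*ℓ+1)
        = (t + (t0 + (2*ℓ+1) - t)) % (2*ℓ+1) :=
      Nat.ModEq.add_left t (Nat.mod_modEq _ (2*ℓ+1))
    have h2 : t + (t0 + (2*ℓ+1) - t) = t0 + (2*ℓ+1) := by omega
    rw [h1, h2, Nat.add_mod_right]
  have he1 : Z k w t0 = Z k w (t + (t0 + (2*ℓ+1) - t) % (2*ℓ+1)) := Z_congr k w hkey.symm
  rcases le_or_gt ((t0 + (2*ℓ+1) - t) % (2*ℓ+1)) ℓ with h | h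
  · left
    rw [he1]
    exact Z_mem_arc hch hℓ ht h
  · right
    have hkey2 : (t + ((t0 + (2*ℓ+1) - t) % (2*ℓ+1) - (ℓ+1))) % (2*ℓ+1)
        = (t0 + ℓ) % (2*ℓ+1) := by
      have h3 : t + (t0 + (2*ℓ+1) - t) % (2*ℓ+1) + ℓ
          = t + ((t0 + (2*ℓ+1) - t) % (2*ℓ+1) - (ℓ+1)) + (2*ℓ+1) := by omega
      have h4 : (t + (t0 + (2*ℓ+1) - t) % (2*ℓ+1) + ℓ) % (2*ℓ+1) = (t0 + ℓ) % (2*ℓ+1) := by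
        have h5 : t + (t0 + (2*ℓ+1) - t) % (2*ℓ+1) ≡ t0 [MOD 2*ℓ+1] := by
          unfold Nat.ModEq
          rw [hkey]
        exact h5.add_right ℓ
      rw [← h4, h3, Nat.add_mod_right]
    have he2 : Z k w (t0+ℓ) = Z k w (t + ((t0 + (2*ℓ+1) - t) % (2*ℓ+1) - (ℓ+1))) :=
      Z_congr k w hkey2.symm
    rw [he2]
    exact Z_mem_arc hch hℓ ht (by omega)

lemma chain_append_of {A B : List (Fin n)} (hA : A.Chain' (· < ·)) (hB : B.Chain' (· < ·))
    (h : ∀ x ∈ A, ∀ y ∈ B, x < y) : (A ++ B).Chain' (· < ·) := by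
  refine List.isChain_append.mpr ?_
  exact ⟨hA, hB, fun x hx y hy => h x (List.mem_of_mem_getLast? hx) y (List.mem_of_mem_head? hy)⟩

lemma rotate_append_own {α : Type*} (X R : List α) : (X ++ R).rotate X.length = R ++ X := by
  rw [List.rotate_eq_drop_append_take (by simp), List.drop_left, List.take_left]

lemma sort_chain (s : Finset (Fin n)) :
    (Finset.sort s (· ≤ ·)).Chain' (· < ·) :=
  List.isChain_iff_pairwise.mpr (Finset.sortedLT_sort s).pairwise

lemma build_copy {r : ℕ} (hr : 2 ≤ r) (H : Finset (Finset (Fin n)))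
    (P Q : List (Fin n)) (hP : P.length = r) (hQ : Q.length = r)
    (hnd : (P ++ Q).Nodup) (hcyc : CyclicSorted (P ++ Q))
    (heH : P.toFinset ∈ H) (hhH : Q.toFinset ∈ H) : HasCopy (M1r r) H := by
  have hlen : (P ++ Q).length = 2*r := by
    simp [hP, hQ]
    omega
  refine ⟨fun i => (P ++ Q).get (Fin.cast hlen.symm i), ?_, ?_, ?_⟩
  · intro i j hij
    have h2 := List.nodup_iff_injective_get.mp hnd hij
    have h3 := congrArg Fin.val h2
    exact Fin.ext h3
  · have hofn : List.ofFn (fun i : Fin (M1r r).m => (P ++ Q).get (Fin.cast hlen.symm i))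
        = P ++ Q := by
      apply List.ext_getElem
      · simp only [List.length_ofFn, hlen]
        rfl
      · intro idx h1 h2
        simp only [List.getElem_ofFn]
        rfl
    rw [hofn]
    exact hcyc
  · intro ed hed
    have hed' : ed = Finset.univ.filter (fun i : Fin (2*r) => (i : ℕ) < r) ∨
        ed = Finset.univ.filter (fun i : Fin (2*r) => r ≤ (i : ℕ)) := by
      exact (Finset.mem_insert.mp hed).imp id Finset.mem_singleton.mp
    rcases hed' with rfl | rfl
    · have himg : (Finset.univ.filter (fun i : Fin (2*r) => (i : ℕ) < r)).image
          (fun i => (P ++ Q).get (Fin.cast hlen.symm i)) = P.toFinset := by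
        ext x
        simp only [Finset.mem_image, Finset.mem_filter, Finset.mem_univ, true_and,
          List.mem_toFinset]
        constructor
        · rintro ⟨i, hi, rfl⟩
          have hilt : (i : ℕ) < P.length := by omega
          have heq : (P ++ Q).get (Fin.cast hlen.symm i) = P[(i : ℕ)]'hilt := by
            show (P ++ Q)[(i : ℕ)]'(by omega) = _
            exact List.getElem_append_left hilt
          rw [heq]
          exact List.getElem_mem hilt
        · intro hx
          obtain ⟨j, hj, rfl⟩ := List.mem_iff_getElem.mp hx
          refine ⟨⟨j, by omega⟩, by simpa using (by omega : j < r), ?_⟩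
          show (P ++ Q)[j]'(by omega) = _
          exact List.getElem_append_left hj
      exact himg ▸ heH
    · have himg : (Finset.univ.filter (fun i : Fin (2*r) => r ≤ (i : ℕ))).image
          (fun i => (P ++ Q).get (Fin.cast hlen.symm i)) = Q.toFinset := by
        ext x
        simp only [Finset.mem_image, Finset.mem_filter, Finset.mem_univ, true_and,
          List.mem_toFinset]
        constructor
        · rintro ⟨i, hi, rfl⟩
          have hige : P.length ≤ (i : ℕ) := by omega
          have hilt : (i : ℕ) - P.length < Q.length := by
            have := i.isLt
            omega
          have heq : (P ++ Q).get (Fin.cast hlen.symm i) = Q[(i : ℕ) - P.length]'hilt := by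
            show (P ++ Q)[(i : ℕ)]'(by omega) = _
            exact List.getElem_append_right hige
          rw [heq]
          exact List.getElem_mem hilt
        · intro hx
          obtain ⟨j, hj, rfl⟩ := List.mem_iff_getElem.mp hx
          refine ⟨⟨j + P.length, by omega⟩, by simpa using (by omega : r ≤ j + P.length), ?_⟩
          show (P ++ Q)[j + P.length]'(by omega) = _
          rw [List.getElem_append_right (by omega)]
          congr 1
          omega
      exact himg ▸ hhH

lemma arcCC_self_left {a b : Fin n} : a ∈ arcCC a b := by
  rw [mem_arcCC_iff]
  omega

lemma arcCC_self_right {a b : Fin n} : b ∈ arcCC a b := by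
  rw [mem_arcCC_iff]
  omega

lemma nodup_of_chain {L : List (Fin n)} (h : L.Chain' (· < ·)) : L.Nodup :=
  (List.isChain_iff_pairwise.mp h).imp (fun hlt => ne_of_lt hlt)

end HnCSat

-- STATEMENT 12
theorem HnC_saturated (n r ℓ : ℕ) (hr : 2 ≤ r) (hℓ : 1 ≤ ℓ)
    (w : Fin (2 * ℓ + 1) → Fin n) (hw : RValid r ℓ w) :
    IsSat (M1r r) r (HnC r ℓ w) := by
  classical
  obtain ⟨⟨winj, wcyc⟩, hcard⟩ := hw
  obtain ⟨k, hch⟩ := wcyc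
  have hch' : ((HnCSat.Wlist w).rotate k).Chain' (· < ·) := hch
  refine ⟨?_, ?_, ?_⟩
  · intro h hh
    exact Finset.mem_powersetCard_univ.mp (Finset.mem_filter.mp hh).1
  · intro hcopy
    exact HnCSat.not_hascopy hr hℓ hch' hcopy
  · intro e hecard heH
    -- find a violated interval
    have hnall : ¬ ∀ i : Fin (2*ℓ+1), (e ∩ arcCC (w i) (w (i-1))).Nonempty := by
      intro hall
      exact heH (Finset.mem_filter.mpr ⟨Finset.mem_powersetCard_univ.mpr hecard, hall⟩)
    push_neg at hnall
    obtain ⟨i0, hi0⟩ := hnall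
    obtain ⟨t0, ht0, hJt0⟩ := HnCSat.Jf_surj k i0
    subst hJt0
    have ew : w (HnCSat.Jf k ℓ t0) = HnCSat.Z k w t0 := rfl
    rw [HnCSat.w_Jf_sub_one k w hℓ t0, ew] at hi0
    have hnotin : ∀ x ∈ e, x ∉ arcCC (HnCSat.Z k w t0) (HnCSat.Z k w (t0+ℓ)) := by
      intro x hx hmem
      exact Finset.not_nonempty_iff_eq_empty.mpr hi0 ⟨x, Finset.mem_inter.mpr ⟨hx, hmem⟩⟩
    have hab : HnCSat.Z k w t0 ≠ HnCSat.Z k w (t0+ℓ) := by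
      rcases lt_or_ge (t0+ℓ) (2*ℓ+1) with h | h
      · exact ne_of_lt (HnCSat.Z_lt hch' (by omega) h)
      · rw [HnCSat.Z_sub k w h]
        exact (ne_of_lt (HnCSat.Z_lt hch' (by omega) ht0)).symm
    have hr2 : r ≤ (arcCC (HnCSat.Z k w t0) (HnCSat.Z k w (t0+ℓ))).card := by
      have h := hcard (HnCSat.Jf k ℓ t0)
      rw [HnCSat.w_Jf_sub_one k w hℓ t0, ew] at h
      exact h
    have hpairsub : ({HnCSat.Z k w t0, HnCSat.Z k w (t0+ℓ)} : Finset (Fin n)) ⊆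
        arcCC (HnCSat.Z k w t0) (HnCSat.Z k w (t0+ℓ)) := by
      intro x hx
      rcases Finset.mem_insert.mp hx with rfl | hx2
      · exact HnCSat.arcCC_self_left
      · rw [Finset.mem_singleton.mp hx2]
        exact HnCSat.arcCC_self_right
    obtain ⟨hs, hsub1, hsub2, hscard⟩ := Finset.exists_subsuperset_card_eq hpairsub
      (by rw [Finset.card_pair hab]; omega) hr2
    have hsH : hs ∈ HnC r ℓ w := by
      refine Finset.mem_filter.mpr ⟨Finset.mem_powersetCard_univ.mpr hscard, ?_⟩
      intro i
      obtain ⟨t, ht, rfl⟩ := HnCSat.Jf_surj k i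
      have ew2 : w (HnCSat.Jf k ℓ t) = HnCSat.Z k w t := rfl
      rw [HnCSat.w_Jf_sub_one k w hℓ t, ew2]
      rcases HnCSat.hit hch' hℓ ht0 t ht with hm | hm
      · exact ⟨_, Finset.mem_inter.mpr ⟨hsub1 (Finset.mem_insert_self _ _), hm⟩⟩
      · exact ⟨_, Finset.mem_inter.mpr
          ⟨hsub1 (Finset.mem_insert_of_mem (Finset.mem_singleton_self _)), hm⟩⟩
    -- abbreviations
    set a := HnCSat.Z k w t0 with hadef
    set b := HnCSat.Z k w (t0+ℓ) with hbdef
    have hin : ∀ y ∈ hs, y ∈ arcCC a b := fun y hy => hsub2 hy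
    rcases le_or_gt a b with hle | hlt
    · -- a ≤ b
      have hchain : (((Finset.sort (e.filter (fun x => ¬ b < x)) (· ≤ ·)) ++ (Finset.sort hs (· ≤ ·))) ++ (Finset.sort (e.filter (fun x => b < x)) (· ≤ ·))).Chain' (· < ·) := by
        refine HnCSat.chain_append_of
          (HnCSat.chain_append_of (HnCSat.sort_chain _) (HnCSat.sort_chain _) ?_)
          (HnCSat.sort_chain _) ?_
        · intro x hx y hy
          rw [Finset.mem_sort, Finset.mem_filter] at hx
          rw [Finset.mem_sort] at hy
          have h1 := hnotin x hx.1
          have h2 := hin y hy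
          simp only [HnCSat.mem_arcCC_iff] at h1 h2
          have h3 := hx.2
          rw [Fin.lt_def] at h3 ⊢
          rw [Fin.le_def] at hle
          omega
        · intro x hx y hy
          rw [Finset.mem_sort, Finset.mem_filter] at hy
          have h2 := hy.2
          rw [Fin.lt_def] at h2 ⊢
          rw [Fin.le_def] at hle
          rcases List.mem_append.mp hx with hx | hx
          · rw [Finset.mem_sort, Finset.mem_filter] at hx
            have h3 := hx.2
            rw [Fin.lt_def] at h3
            omega
          · rw [Finset.mem_sort] at hx
            have h1 := hin x hx
            simp only [HnCSat.mem_arcCC_iff] at h1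
            omega
      have hrot : (((Finset.sort (e.filter (fun x => b < x)) (· ≤ ·)) ++ (Finset.sort (e.filter (fun x => ¬ b < x)) (· ≤ ·))) ++ (Finset.sort hs (· ≤ ·))).rotate (Finset.sort (e.filter (fun x => b < x)) (· ≤ ·)).length
          = ((Finset.sort (e.filter (fun x => ¬ b < x)) (· ≤ ·)) ++ (Finset.sort hs (· ≤ ·))) ++ (Finset.sort (e.filter (fun x => b < x)) (· ≤ ·)) := by
        rw [List.append_assoc]
        exact HnCSat.rotate_append_own (Finset.sort (e.filter (fun x => b < x)) (· ≤ ·)) ((Finset.sort (e.filter (fun x => ¬ b < x)) (· ≤ ·)) ++ (Finset.sort hs (· ≤ ·)))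
      have hcyc : CyclicSorted (((Finset.sort (e.filter (fun x => b < x)) (· ≤ ·)) ++ (Finset.sort (e.filter (fun x => ¬ b < x)) (· ≤ ·))) ++ (Finset.sort hs (· ≤ ·))) :=
        ⟨(Finset.sort (e.filter (fun x => b < x)) (· ≤ ·)).length, by rw [hrot]; exact hchain⟩
      have hnd : (((Finset.sort (e.filter (fun x => b < x)) (· ≤ ·)) ++ (Finset.sort (e.filter (fun x => ¬ b < x)) (· ≤ ·))) ++ (Finset.sort hs (· ≤ ·))).Nodup := by
        rw [← List.nodup_rotate (n := (Finset.sort (e.filter (fun x => b < x)) (· ≤ ·)).length), hrot]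
        exact HnCSat.nodup_of_chain hchain
      apply HnCSat.build_copy hr _ ((Finset.sort (e.filter (fun x => b < x)) (· ≤ ·)) ++ (Finset.sort (e.filter (fun x => ¬ b < x)) (· ≤ ·))) (Finset.sort hs (· ≤ ·)) ?_ ?_ hnd hcyc
      · rw [List.toFinset_append, Finset.sort_toFinset, Finset.sort_toFinset,
          Finset.filter_union_filter_not_eq]
        exact Finset.mem_insert_self _ _
      · rw [Finset.sort_toFinset]
        exact Finset.mem_insert_of_mem hsH
      · rw [List.length_append, Finset.length_sort, Finset.length_sort,
          Finset.card_filter_add_card_filter_not, hecard]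
      · rw [Finset.length_sort, hscard]
    · -- b < a
      have hchain : ((Finset.sort (hs.filter (fun x => ¬ a ≤ x)) (· ≤ ·)) ++ ((Finset.sort e (· ≤ ·)) ++ (Finset.sort (hs.filter (fun x => a ≤ x)) (· ≤ ·)))).Chain' (· < ·) := by
        refine HnCSat.chain_append_of (HnCSat.sort_chain _)
          (HnCSat.chain_append_of (HnCSat.sort_chain _) (HnCSat.sort_chain _) ?_) ?_
        · intro x hx y hy
          rw [Finset.mem_sort] at hx
          rw [Finset.mem_sort, Finset.mem_filter] at hy
          have h1 := hnotin x hx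
          simp only [HnCSat.mem_arcCC_iff] at h1
          have h2 := hy.2
          rw [Fin.le_def] at h2
          rw [Fin.lt_def] at hlt ⊢
          omega
        · intro x hx y hy
          rw [Finset.mem_sort, Finset.mem_filter] at hx
          have h1 := hin x hx.1
          simp only [HnCSat.mem_arcCC_iff] at h1
          have h3 := hx.2
          rw [Fin.le_def] at h3
          rw [Fin.lt_def] at hlt ⊢
          rcases List.mem_append.mp hy with hy | hy
          · rw [Finset.mem_sort] at hy
            have h4 := hnotin y hy
            simp only [HnCSat.mem_arcCC_iff] at h4
            omega
          · rw [Finset.mem_sort, Finset.mem_filter] at hy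
            have h4 := hy.2
            rw [Fin.le_def] at h4
            omega
      have hrot : (((Finset.sort e (· ≤ ·)) ++ ((Finset.sort (hs.filter (fun x => a ≤ x)) (· ≤ ·)) ++ (Finset.sort (hs.filter (fun x => ¬ a ≤ x)) (· ≤ ·))))).rotate ((Finset.sort e (· ≤ ·)) ++ (Finset.sort (hs.filter (fun x => a ≤ x)) (· ≤ ·))).length
          = (Finset.sort (hs.filter (fun x => ¬ a ≤ x)) (· ≤ ·)) ++ ((Finset.sort e (· ≤ ·)) ++ (Finset.sort (hs.filter (fun x => a ≤ x)) (· ≤ ·))) := by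
        rw [← List.append_assoc]
        exact HnCSat.rotate_append_own ((Finset.sort e (· ≤ ·)) ++ (Finset.sort (hs.filter (fun x => a ≤ x)) (· ≤ ·))) (Finset.sort (hs.filter (fun x => ¬ a ≤ x)) (· ≤ ·))
      have hcyc : CyclicSorted ((Finset.sort e (· ≤ ·)) ++ ((Finset.sort (hs.filter (fun x => a ≤ x)) (· ≤ ·)) ++ (Finset.sort (hs.filter (fun x => ¬ a ≤ x)) (· ≤ ·)))) :=
        ⟨((Finset.sort e (· ≤ ·)) ++ (Finset.sort (hs.filter (fun x => a ≤ x)) (· ≤ ·))).length, by rw [hrot]; exact hchain⟩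
      have hnd : ((Finset.sort e (· ≤ ·)) ++ ((Finset.sort (hs.filter (fun x => a ≤ x)) (· ≤ ·)) ++ (Finset.sort (hs.filter (fun x => ¬ a ≤ x)) (· ≤ ·)))).Nodup := by
        rw [← List.nodup_rotate (n := ((Finset.sort e (· ≤ ·)) ++ (Finset.sort (hs.filter (fun x => a ≤ x)) (· ≤ ·))).length), hrot]
        exact HnCSat.nodup_of_chain hchain
      apply HnCSat.build_copy hr _ (Finset.sort e (· ≤ ·)) ((Finset.sort (hs.filter (fun x => a ≤ x)) (· ≤ ·)) ++ (Finset.sort (hs.filter (fun x => ¬ a ≤ x)) (· ≤ ·))) ?_ ?_ hnd hcyc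
      · rw [Finset.sort_toFinset]
        exact Finset.mem_insert_self _ _
      · rw [List.toFinset_append, Finset.sort_toFinset, Finset.sort_toFinset,
          Finset.filter_union_filter_not_eq]
        exact Finset.mem_insert_of_mem hsH
      · rw [Finset.length_sort, hecard]
      · rw [List.length_append, Finset.length_sort, Finset.length_sort,
          Finset.card_filter_add_card_filter_not, hscard]
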